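/- Let R be a commutative domain, σ a ring endomorphism of R, and M an R-module satisfying the condition (C_{id}^2): for all m ∈ M and a ∈ R, a²·m = 0 implies a·m = 0. Then the Nagata extension R⊕_σM is an Armendariz ring. -/

import Mathlib

/-- The Nagata extension `R ⊕_σ M` of a commutative ring `R` by an `R`-module `M` along a
ring endomorphism `σ` of `R`: the underlying additive group is `R × M`, with multiplication
`(a, m) * (b, n) = (a * b, σ a • n + b • m)`. -/
@[nolint unusedArguments]
def Nagata (R : Type*) [CommRing R] (σ : R →+* R) (M : Type*)
    [AddCommGroup M] [Module R M] : Type _ := R × M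

namespace Nagata

variable {R : Type*} [CommRing R] {σ : R →+* R} {M : Type*} [AddCommGroup M] [Module R M]

instance : AddCommGroup (Nagata R σ M) := inferInstanceAs (AddCommGroup (R × M))

/-- The element `(a, m)` of the Nagata extension. -/
def mk (a : R) (m : M) : Nagata R σ M := (a, m)

instance : Ring (Nagata R σ M) where
  __ := (inferInstance : AddCommGroup (Nagata R σ M))
  mul x y := (x.1 * y.1, σ x.1 • y.2 + y.1 • x.2)
  one := ((1 : R), (0 : M))
  left_distrib x y z := by
    refine Prod.ext ?_ ?_
    · show x.1 * (y.1 + z.1) = x.1 * y.1 + x.1 * z.1; ring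
    · show σ x.1 • (y.2 + z.2) + (y.1 + z.1) • x.2
          = (σ x.1 • y.2 + y.1 • x.2) + (σ x.1 • z.2 + z.1 • x.2)
      rw [smul_add, add_smul]; abel
  right_distrib x y z := by
    refine Prod.ext ?_ ?_
    · show (x.1 + y.1) * z.1 = x.1 * z.1 + y.1 * z.1; ring
    · show σ (x.1 + y.1) • z.2 + z.1 • (x.2 + y.2)
          = (σ x.1 • z.2 + z.1 • x.2) + (σ y.1 • z.2 + z.1 • y.2)
      rw [map_add, add_smul, smul_add]; abel
  zero_mul x := by
    refine Prod.ext ?_ ?_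
    · show (0 : R) * x.1 = 0; ring
    · show σ (0 : R) • x.2 + x.1 • (0 : M) = 0; simp
  mul_zero x := by
    refine Prod.ext ?_ ?_
    · show x.1 * (0 : R) = 0; ring
    · show σ x.1 • (0 : M) + (0 : R) • x.2 = 0; simp
  mul_assoc x y z := by
    refine Prod.ext ?_ ?_
    · show x.1 * y.1 * z.1 = x.1 * (y.1 * z.1); ring
    · show σ (x.1 * y.1) • z.2 + z.1 • (σ x.1 • y.2 + y.1 • x.2)
          = σ x.1 • (σ y.1 • z.2 + z.1 • y.2) + (y.1 * z.1) • x.2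
      rw [map_mul, mul_smul, smul_add, smul_add, mul_smul, smul_comm z.1 (σ x.1),
        smul_comm z.1 y.1]
      abel
  one_mul x := by
    refine Prod.ext ?_ ?_
    · show 1 * x.1 = x.1; ring
    · show σ 1 • x.2 + x.1 • (0 : M) = x.2; simp
  mul_one x := by
    refine Prod.ext ?_ ?_
    · show x.1 * 1 = x.1; ring
    · show σ x.1 • (0 : M) + (1 : R) • x.2 = x.2; simp

end Nagata

section Aux

lemma key_arm {R : Type*} [CommRing R] {M : Type*} [AddCommGroup M] [Module R M]
    (hC2 : ∀ (m : M) (a : R), (a * a) • m = 0 → a • m = 0) (m : ℕ → M) :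
    ∀ (N : ℕ) (b : ℕ → R), (∀ i, N ≤ i → b i = 0) →
      (∀ k, ∑ i ∈ Finset.range (k + 1), b i • m (k - i) = 0) →
      ∀ i j, b i • m j = 0 := by
  intro N
  induction N with
  | zero =>
    intro b hb _ i j
    rw [hb i (Nat.zero_le i), zero_smul]
  | succ N ih =>
    intro b hb hsum
    have h0 : ∀ j, b 0 • m j = 0 := by
      intro j
      induction j using Nat.strong_induction_on with
      | _ j ihj =>
        have h := congrArg (fun z => b 0 • z) (hsum j)
        simp only [Finset.smul_sum, smul_zero] at h
        rw [Finset.sum_range_succ'] at h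
        have hz : ∀ i ∈ Finset.range j, b 0 • b (i + 1) • m (j - (i + 1)) = 0 := by
          intro i hi
          have hij := Finset.mem_range.mp hi
          rw [smul_comm, ihj (j - (i + 1)) (by omega), smul_zero]
        rw [Finset.sum_congr rfl hz, Finset.sum_const_zero, zero_add, Nat.sub_zero,
          ← mul_smul] at h
        exact hC2 _ _ h
    have hsum' : ∀ k, ∑ i ∈ Finset.range (k + 1), b (i + 1) • m (k - i) = 0 := by
      intro k
      have h := hsum (k + 1)
      rw [Finset.sum_range_succ'] at h
      rw [Nat.sub_zero, h0, add_zero] at h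
      rw [← h]
      refine Finset.sum_congr rfl fun i hi => ?_
      rw [Nat.succ_sub_succ]
    have := ih (fun i => b (i + 1)) (fun i hi => hb (i + 1) (by omega)) hsum'
    intro i j
    cases i with
    | zero => exact h0 j
    | succ n => exact this n j

namespace Nagata

variable {R : Type*} [CommRing R] {σ : R →+* R} {M : Type*} [AddCommGroup M] [Module R M]

/-- First projection as a ring homomorphism. -/
def fstHom : Nagata R σ M →+* R where
  toFun x := x.1
  map_one' := rfl
  map_mul' _ _ := rfl
  map_zero' := rfl
  map_add' _ _ := rfl

/-- Second projection as an additive monoid homomorphism. -/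
def sndHom : Nagata R σ M →+ M where
  toFun x := x.2
  map_zero' := rfl
  map_add' _ _ := rfl

lemma snd_mul (x y : Nagata R σ M) : (x * y).2 = σ x.1 • y.2 + y.1 • x.2 := rfl

lemma fst_mul (x y : Nagata R σ M) : (x * y).1 = x.1 * y.1 := rfl

end Nagata

end Aux

/-- A ring `S` is Armendariz if whenever polynomials over it satisfy `f * g = 0`, all
products of their coefficients vanish. -/
def IsArmendarizRing (S : Type*) [Ring S] : Prop :=
  ∀ f g : Polynomial S, f * g = 0 → ∀ i j, f.coeff i * g.coeff j = 0

/-- If `R` is a commutative domain and `M` is an `R`-module satisfying the condition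
`(C_id^2)` (`a² • m = 0` implies `a • m = 0`), then the Nagata extension `R ⊕_σ M` is an
Armendariz ring. -/
theorem nagata_armendariz_of_C2
    (R : Type*) [CommRing R] [IsDomain R] (σ : R →+* R)
    (M : Type*) [AddCommGroup M] [Module R M]
    (hC2 : ∀ (m : M) (a : R), (a * a) • m = 0 → a • m = 0) :
    IsArmendarizRing (Nagata R σ M) := by

  intro f g hfg i j
  have hFG : f.map (Nagata.fstHom (σ := σ)) * g.map (Nagata.fstHom (σ := σ)) = 0 := by
    rw [← Polynomial.map_mul, hfg, Polynomial.map_zero]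
  have hcoeff2 : ∀ k, ∑ p ∈ Finset.HasAntidiagonal.antidiagonal k,
      (σ (f.coeff p.1).1 • (g.coeff p.2).2 + (g.coeff p.2).1 • (f.coeff p.1).2) = 0 := by
    intro k
    have h := congrArg (fun q => Nagata.sndHom (σ := σ) (q.coeff k)) hfg
    simp only [Polynomial.coeff_mul, map_sum, Polynomial.coeff_zero, map_zero] at h
    exact h
  rcases mul_eq_zero.mp hFG with hF | hF
  · -- f has zero first components
    have ha : ∀ i, (f.coeff i).1 = 0 := by
      intro i
      have := congrArg (fun q => q.coeff i) hF
      simp only [Polynomial.coeff_map, Polynomial.coeff_zero] at this; exact this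
    set b : ℕ → R := fun j => (g.coeff j).1 with hb
    set m : ℕ → M := fun i => (f.coeff i).2 with hm
    have hsum : ∀ k, ∑ i ∈ Finset.range (k + 1), b i • m (k - i) = 0 := by
      intro k
      have h := hcoeff2 k
      have h2 : ∑ p ∈ Finset.HasAntidiagonal.antidiagonal k, b p.2 • m p.1 = 0 := by
        rw [← h]
        refine Finset.sum_congr rfl fun p hp => ?_
        rw [ha, map_zero, zero_smul, zero_add]
      rw [Finset.Nat.sum_antidiagonal_eq_sum_range_succ (fun i j => b j • m i)] at h2
      rw [← h2]
      rw [← Finset.sum_range_reflect (fun i => b (k - i) • m i) (k + 1)]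
      refine Finset.sum_congr rfl fun i hi => ?_
      have hik := Finset.mem_range.mp hi
      congr 2 <;> omega
    have hkey := key_arm hC2 m (g.natDegree + 1) b
      (fun i hi => by
        simp only [hb]
        rw [Polynomial.coeff_eq_zero_of_natDegree_lt (show g.natDegree < i by omega)]
        rfl) hsum
    refine Prod.ext ?_ ?_
    · show (f.coeff i).1 * (g.coeff j).1 = 0
      rw [ha, zero_mul]
    · show σ (f.coeff i).1 • (g.coeff j).2 + (g.coeff j).1 • (f.coeff i).2 = 0
      rw [ha, map_zero, zero_smul, zero_add]
      exact hkey j i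
  · -- g has zero first components
    have ha : ∀ j, (g.coeff j).1 = 0 := by
      intro j
      have := congrArg (fun q => q.coeff j) hF
      simp only [Polynomial.coeff_map, Polynomial.coeff_zero] at this; exact this
    set b : ℕ → R := fun i => σ (f.coeff i).1 with hb
    set m : ℕ → M := fun j => (g.coeff j).2 with hm
    have hsum : ∀ k, ∑ i ∈ Finset.range (k + 1), b i • m (k - i) = 0 := by
      intro k
      have h := hcoeff2 k
      have h2 : ∑ p ∈ Finset.HasAntidiagonal.antidiagonal k, b p.1 • m p.2 = 0 := by
        rw [← h]
        refine Finset.sum_congr rfl fun p hp => ?_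
        rw [ha, zero_smul, add_zero]
      rw [Finset.Nat.sum_antidiagonal_eq_sum_range_succ (fun i j => b i • m j)] at h2
      exact h2
    have hkey := key_arm hC2 m (f.natDegree + 1) b
      (fun i hi => by
        simp only [hb]
        rw [Polynomial.coeff_eq_zero_of_natDegree_lt (show f.natDegree < i by omega)]
        show σ (0 : R) = 0
        exact map_zero σ) hsum
    refine Prod.ext ?_ ?_
    · show (f.coeff i).1 * (g.coeff j).1 = 0
      rw [ha, mul_zero]
    · show σ (f.coeff i).1 • (g.coeff j).2 + (g.coeff j).1 • (f.coeff i).2 = 0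
      rw [ha, zero_smul, add_zero]
      exact hkey i j
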